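/- In the Skorokhod construction, if (φ, η↑, η↓) solves the reflection problem on [0,a] for the continuous path ψ_t = log S*_t - log S₀ - log(1-τ), and X solves dX_t = X_t[(1+(1-τ)β)^{-1} dη↑_t - (1+β/(1-τ))^{-1} dη↓_t], X₀ = x, with Y defined via dY = -βY[(1-τ)dX↑/X - (1/(1-τ))dX↓/X], Y₀ = y, then φ_t = log(S*_t/((1-τ)S_t)) for all t, where S = βY/X. In particular 0 ≤ φ ≤ a is equivalent to (1-τ)S ≤ S* ≤ S/(1-τ). -/

import Mathlib

/-- **Identification of the reflected process.** If `(φ, η↑, η↓)` solves the Skorokhod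
reflection problem on `[0,a]`, `a = -2·log(1-τ)`, for the path
`ψ_t = log S*_t - log S₀ - log(1-τ)` with `S₀ = βy/x`, and `X`, `Y` are the explicit
exponential solutions of the linear equations
`dX = X[(1+(1-τ)β)⁻¹ dη↑ - (1+β/(1-τ))⁻¹ dη↓]`, `X₀ = x`, and
`dY = -βY[(1-τ) dX↑/X - (1/(1-τ)) dX↓/X]`, `Y₀ = y`,
then `φ_t = log(S*_t/((1-τ)S_t))` for all `t`, where `S = βY/X`; in particular
`0 ≤ φ_t ≤ a` is equivalent to `(1-τ)S_t ≤ S*_t ≤ S_t/(1-τ)`. -/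
theorem stmt_19 (α τ β x y a : ℝ)
    (hα : α ∈ Set.Ioo (0 : ℝ) 1) (hτ : τ ∈ Set.Ioo (0 : ℝ) 1)
    (hβ : β = α / (1 - α)) (hx : 0 < x) (hy : 0 < y)
    (ha : a = -2 * Real.log (1 - τ))
    (Sstar ψ φ ηup ηdown X Y S : ℝ → ℝ)
    (hScont : Continuous Sstar) (hSpos : ∀ t, 0 < Sstar t)
    (hψ : ∀ t, ψ t = Real.log (Sstar t) - Real.log (β * y / x) - Real.log (1 - τ))
    (hψ0 : 0 ≤ ψ 0 ∧ ψ 0 ≤ a)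
    (hηupmono : Monotone ηup) (hηdownmono : Monotone ηdown)
    (hηupcont : Continuous ηup) (hηdowncont : Continuous ηdown)
    (hηup0 : ηup 0 = 0) (hηdown0 : ηdown 0 = 0)
    (hφ : ∀ t, φ t = ψ t + ηup t - ηdown t)
    (hrange : ∀ t, 0 ≤ t → 0 ≤ φ t ∧ φ t ≤ a)
    (hηupflat : ∀ s t, 0 ≤ s → s ≤ t → (∀ u ∈ Set.Icc s t, φ u ≠ 0) → ηup t = ηup s)
    (hηdownflat : ∀ s t, 0 ≤ s → s ≤ t → (∀ u ∈ Set.Icc s t, φ u ≠ a) → ηdown t = ηdown s)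
    (hX : ∀ t, X t = x * Real.exp
      (ηup t / (1 + (1 - τ) * β) - ηdown t / (1 + β / (1 - τ))))
    (hY : ∀ t, Y t = y * Real.exp
      (-((1 - τ) * β * ηup t / (1 + (1 - τ) * β)) + β / (1 - τ) * ηdown t / (1 + β / (1 - τ))))
    (hS : ∀ t, S t = β * Y t / X t) :
    (∀ t, φ t = Real.log (Sstar t / ((1 - τ) * S t))) ∧
    (∀ t, (0 ≤ φ t ∧ φ t ≤ a) ↔ ((1 - τ) * S t ≤ Sstar t ∧ Sstar t ≤ S t / (1 - τ))) := by

  obtain ⟨hα0, hα1⟩ := hα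
  obtain ⟨hτ0, hτ1⟩ := hτ
  have h1τ : (0:ℝ) < 1 - τ := by linarith
  have hβpos : 0 < β := by
    rw [hβ]; exact div_pos hα0 (by linarith)
  have hD1 : (0:ℝ) < 1 + (1 - τ) * β := by positivity
  have hD2 : (0:ℝ) < 1 + β / (1 - τ) := by positivity
  have hSval : ∀ t, S t = β * y / x * Real.exp (ηdown t - ηup t) := by
    intro t
    have hAB : (-((1 - τ) * β * ηup t / (1 + (1 - τ) * β)) +
        β / (1 - τ) * ηdown t / (1 + β / (1 - τ)))
        = (ηdown t - ηup t) + (ηup t / (1 + (1 - τ) * β) - ηdown t / (1 + β / (1 - τ))) := by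
      field_simp
      ring
    rw [hS, hY, hX, hAB, Real.exp_add]
    have he : Real.exp (ηup t / (1 + (1 - τ) * β) - ηdown t / (1 + β / (1 - τ))) ≠ 0 :=
      Real.exp_ne_zero _
    rw [show β * (y * (Real.exp (ηdown t - ηup t) *
        Real.exp (ηup t / (1 + (1 - τ) * β) - ηdown t / (1 + β / (1 - τ))))) /
        (x * Real.exp (ηup t / (1 + (1 - τ) * β) - ηdown t / (1 + β / (1 - τ))))
        = β * y / x * Real.exp (ηdown t - ηup t) *
          (Real.exp (ηup t / (1 + (1 - τ) * β) - ηdown t / (1 + β / (1 - τ))) /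
           Real.exp (ηup t / (1 + (1 - τ) * β) - ηdown t / (1 + β / (1 - τ)))) by
      field_simp, div_self he, mul_one]
  have hSposT : ∀ t, 0 < S t := by
    intro t; rw [hSval]
    exact mul_pos (div_pos (mul_pos hβpos hy) hx) (Real.exp_pos _)
  have key : ∀ t, φ t = Real.log (Sstar t / ((1 - τ) * S t)) := by
    intro t
    rw [Real.log_div (ne_of_gt (hSpos t)) (ne_of_gt (mul_pos h1τ (hSposT t))),
        Real.log_mul (ne_of_gt h1τ) (ne_of_gt (hSposT t)), hSval,
        Real.log_mul (ne_of_gt (div_pos (mul_pos hβpos hy) hx)) (Real.exp_ne_zero _), Real.log_exp,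
        hφ t, hψ t]
    ring
  refine ⟨key, fun t => ?_⟩
  have e1 : Real.log (Sstar t / ((1 - τ) * S t))
      = Real.log (Sstar t) - (Real.log (1 - τ) + Real.log (S t)) := by
    rw [Real.log_div (ne_of_gt (hSpos t)) (ne_of_gt (mul_pos h1τ (hSposT t))),
        Real.log_mul (ne_of_gt h1τ) (ne_of_gt (hSposT t))]
  have e2 : Real.log (S t / (1 - τ)) = Real.log (S t) - Real.log (1 - τ) :=
    Real.log_div (ne_of_gt (hSposT t)) (ne_of_gt h1τ)
  have l1 : Real.log ((1 - τ) * S t) ≤ Real.log (Sstar t) ↔ (1 - τ) * S t ≤ Sstar t :=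
    Real.log_le_log_iff (mul_pos h1τ (hSposT t)) (hSpos t)
  have l2 : Real.log (Sstar t) ≤ Real.log (S t / (1 - τ)) ↔ Sstar t ≤ S t / (1 - τ) :=
    Real.log_le_log_iff (hSpos t) (div_pos (hSposT t) h1τ)
  have e3 : Real.log ((1 - τ) * S t) = Real.log (1 - τ) + Real.log (S t) :=
    Real.log_mul (ne_of_gt h1τ) (ne_of_gt (hSposT t))
  rw [key t, e1, ha]
  constructor
  · rintro ⟨h1, h2⟩
    constructor
    · rw [← l1, e3]; linarith
    · rw [← l2, e2]; linarith
  · rintro ⟨h1, h2⟩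
    rw [← l1, e3] at h1
    rw [← l2, e2] at h2
    constructor <;> linarith
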